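/- An LD-resolvent of a well-moded query and a well-moded clause that is variable-disjoint with it is well-moded. Precisely: let A, Ā be a well-moded query with leftmost atom A, let H ← B̄ be a well-moded clause sharing no variables with the query, and let θ be a most general unifier of A and H; then the LD-resolvent (B̄, Ā)θ is a well-moded query. -/

import Mathlib

/-- First-order terms over function symbols `F` and variables `V`. -/
inductive Term (F V : Type) : Type where
  | var : V → Term F V
  | fn  : F → List (Term F V) → Term F V

namespace Term

/-- `VarIn v t` holds iff the variable `v` occurs in the term `t`. -/
inductive VarIn {F V : Type} : V → Term F V → Prop where
  | var (v : V) : VarIn v (.var v)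
  | fn {v : V} (f : F) {args : List (Term F V)} {t : Term F V} :
      t ∈ args → VarIn v t → VarIn v (.fn f args)

/-- Application of a substitution (a map from variables to terms) to a term. -/
def subst {F V : Type} (σ : V → Term F V) : Term F V → Term F V
  | .var v => σ v
  | .fn f args => .fn f (args.attach.map fun t => subst σ t.1)
termination_by t => sizeOf t
decreasing_by
  have := List.sizeOf_lt_of_mem t.2
  simp only [Term.fn.sizeOf_spec]
  omega

end Term

/-- The set of variables occurring in a list (tuple) of terms. -/
def varsOf {F V : Type} (ts : List (Term F V)) : Set V :=
  {v | ∃ t ∈ ts, Term.VarIn v t}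

/-- An atom `p(s̄, t̄)`: a relation symbol together with the tuple of terms
filling its input positions and the tuple filling its output positions. -/
structure Atom (P F V : Type) where
  pred : P
  inputs : List (Term F V)
  outputs : List (Term F V)

/-- Application of a substitution to an atom. -/
def Atom.subst {P F V : Type} (σ : V → Term F V) (A : Atom P F V) : Atom P F V :=
  ⟨A.pred, A.inputs.map (Term.subst σ), A.outputs.map (Term.subst σ)⟩

/-- The set of variables occurring in an atom. -/
def Atom.vars {P F V : Type} (A : Atom P F V) : Set V :=
  varsOf A.inputs ∪ varsOf A.outputs

/-- The set of variables occurring in a query (a list of atoms). -/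
def queryVars {P F V : Type} (Q : List (Atom P F V)) : Set V :=
  {v | ∃ a ∈ Q, v ∈ a.vars}

/-- A query `p_1(s̄_1,t̄_1), …, p_n(s̄_n,t̄_n)` is well-moded iff for every `i`,
`Var(s̄_i) ⊆ ⋃_{j=1}^{i-1} Var(t̄_j)`. -/
def WellModedQuery {P F V : Type} (Q : List (Atom P F V)) : Prop :=
  ∀ i (h : i < Q.length),
    varsOf (Q.get ⟨i, h⟩).inputs ⊆ varsOf (((Q.take i).map Atom.outputs).flatten)

/-- A clause `p_0(t̄_0, s̄_{n+1}) ← p_1(s̄_1,t̄_1), …, p_n(s̄_n,t̄_n)` (with head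
input tuple `t̄_0 = head.inputs` and head output tuple `s̄_{n+1} = head.outputs`)
is well-moded iff for every `i ∈ [1, n+1]`, `Var(s̄_i) ⊆ ⋃_{j=0}^{i-1} Var(t̄_j)`. -/
def WellModedClause {P F V : Type} (head : Atom P F V) (body : List (Atom P F V)) : Prop :=
  (∀ i (h : i < body.length),
    varsOf (body.get ⟨i, h⟩).inputs ⊆
      varsOf (head.inputs ++ ((body.take i).map Atom.outputs).flatten)) ∧
  varsOf head.outputs ⊆ varsOf (head.inputs ++ (body.map Atom.outputs).flatten)

/-- Composition of substitutions: first apply `θ`, then `τ`. -/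
def Subst.comp {F V : Type} (θ τ : V → Term F V) : V → Term F V :=
  fun v => (θ v).subst τ

/-- `θ` is a unifier of the atoms `A` and `H` iff `Aθ = Hθ`. -/
def IsUnifier {P F V : Type} (θ : V → Term F V) (A H : Atom P F V) : Prop :=
  A.subst θ = H.subst θ

/-- `θ` is a most general unifier of `A` and `H` iff it is a unifier and every
unifier of `A` and `H` factors through it. -/
def IsMGU {P F V : Type} (θ : V → Term F V) (A H : Atom P F V) : Prop :=
  IsUnifier θ A H ∧ ∀ σ : V → Term F V, IsUnifier σ A H → ∃ τ : V → Term F V,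
    ∀ v, σ v = (θ v).subst τ


theorem varIn_fn_iff {F V : Type} {v : V} {f : F} {args : List (Term F V)} :
    Term.VarIn v (.fn f args) ↔ ∃ t ∈ args, Term.VarIn v t := by
  constructor
  · intro h
    cases h with
    | fn _ hs hws => exact ⟨_, hs, hws⟩
  · rintro ⟨t, ht, hv⟩; exact .fn f ht hv

theorem varIn_subst {F V : Type} (θ : V → Term F V) (v : V) :
    ∀ t : Term F V, Term.VarIn v (Term.subst θ t) ↔ ∃ w, Term.VarIn w t ∧ Term.VarIn v (θ w)
  | .var u => by
      rw [Term.subst]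
      constructor
      · intro h; exact ⟨u, .var u, h⟩
      · rintro ⟨w, hw, hv⟩; cases hw; exact hv
  | .fn f args => by
      rw [Term.subst]
      constructor
      · intro h
        obtain ⟨t', hmem, hvin⟩ := varIn_fn_iff.mp h
        obtain ⟨⟨s, hs⟩, -, rfl⟩ := List.mem_map.mp hmem
        obtain ⟨w, hw, hv⟩ := (varIn_subst θ v s).mp hvin
        exact ⟨w, .fn f hs hw, hv⟩
      · rintro ⟨w, hw, hv⟩
        obtain ⟨t, hs, hws⟩ := varIn_fn_iff.mp hw
        exact varIn_fn_iff.mpr ⟨_, List.mem_map.mpr ⟨⟨t, hs⟩, List.mem_attach _ _, rfl⟩,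
          (varIn_subst θ v t).mpr ⟨w, hws, hv⟩⟩
termination_by t => sizeOf t
decreasing_by
  all_goals (have := List.sizeOf_lt_of_mem hs; simp only [Term.fn.sizeOf_spec]; omega)

theorem mem_varsOf_map_subst {F V : Type} {θ : V → Term F V} {v : V}
    {ts : List (Term F V)} :
    v ∈ varsOf (ts.map (Term.subst θ)) ↔ ∃ w ∈ varsOf ts, Term.VarIn v (θ w) := by
  constructor
  · rintro ⟨t', ht', hv⟩
    obtain ⟨t, ht, rfl⟩ := List.mem_map.mp ht'
    obtain ⟨w, hw, hvw⟩ := (varIn_subst θ v t).mp hv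
    exact ⟨w, ⟨t, ht, hw⟩, hvw⟩
  · rintro ⟨w, ⟨t, ht, hw⟩, hv⟩
    exact ⟨_, List.mem_map_of_mem ht, (varIn_subst θ v t).mpr ⟨w, hw, hv⟩⟩

theorem varsOf_map_subst_mono {F V : Type} (θ : V → Term F V)
    {S T : List (Term F V)} (h : varsOf S ⊆ varsOf T) :
    varsOf (S.map (Term.subst θ)) ⊆ varsOf (T.map (Term.subst θ)) := by
  intro v hv
  obtain ⟨w, hw, hvw⟩ := mem_varsOf_map_subst.mp hv
  exact mem_varsOf_map_subst.mpr ⟨w, h hw, hvw⟩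

theorem varsOf_append {F V : Type} (a b : List (Term F V)) :
    varsOf (a ++ b) = varsOf a ∪ varsOf b := by
  ext v
  simp only [varsOf, Set.mem_setOf_eq, List.mem_append, Set.mem_union]
  constructor
  · rintro ⟨t, ht | ht, hv⟩
    · exact Or.inl ⟨t, ht, hv⟩
    · exact Or.inr ⟨t, ht, hv⟩
  · rintro (⟨t, ht, hv⟩ | ⟨t, ht, hv⟩)
    · exact ⟨t, Or.inl ht, hv⟩
    · exact ⟨t, Or.inr ht, hv⟩

theorem outputs_flatten_map {P F V : Type} (θ : V → Term F V) (l : List (Atom P F V)) :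
    ((l.map (Atom.subst θ)).map Atom.outputs).flatten
      = ((l.map Atom.outputs).flatten).map (Term.subst θ) := by
  rw [List.map_flatten, List.map_map, List.map_map]
  rfl

/-- An LD-resolvent of a well-moded query and a well-moded clause that is
variable-disjoint with it is well-moded: if `A :: Abar` is a well-moded query
with leftmost atom `A`, `H ← Bbar` is a well-moded clause sharing no variables
with the query, and `θ` is a most general unifier of `A` and `H`, then the
LD-resolvent `(Bbar ++ Abar)θ` is a well-moded query. -/
theorem ld_resolvent_well_moded
    {P F V : Type} (A : Atom P F V) (Abar : List (Atom P F V))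
    (H : Atom P F V) (Bbar : List (Atom P F V)) (θ : V → Term F V)
    (hquery : WellModedQuery (A :: Abar))
    (hclause : WellModedClause H Bbar)
    (hdisj : Disjoint (queryVars (A :: Abar)) (H.vars ∪ queryVars Bbar))
    (hmgu : IsMGU θ A H) :
    WellModedQuery ((Bbar ++ Abar).map (Atom.subst θ)) := by
  -- A's inputs are ground
  have hA0 : varsOf A.inputs ⊆ (∅ : Set V) := by
    have := hquery 0 (by simp)
    simpa [varsOf] using this
  have hAground : varsOf (A.inputs.map (Term.subst θ)) = (∅ : Set V) := by
    ext v
    simp only [Set.mem_empty_iff_false, iff_false]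
    intro hv
    obtain ⟨w, hw, -⟩ := mem_varsOf_map_subst.mp hv
    exact hA0 hw
  -- unifier equalities
  have hin : A.inputs.map (Term.subst θ) = H.inputs.map (Term.subst θ) :=
    congrArg Atom.inputs hmgu.1
  have hout : A.outputs.map (Term.subst θ) = H.outputs.map (Term.subst θ) :=
    congrArg Atom.outputs hmgu.1
  have hHground : varsOf (H.inputs.map (Term.subst θ)) = (∅ : Set V) := by
    rw [← hin]; exact hAground
  intro i hi
  simp only [List.get_eq_getElem, List.getElem_map, List.map_take, ← List.map_take,
    outputs_flatten_map]
  rw [List.length_map, List.length_append] at hi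
  by_cases hiB : i < Bbar.length
  · -- atom from the clause body
    rw [List.getElem_append_left hiB, List.take_append_of_le_length (le_of_lt hiB)]
    have hcl := hclause.1 i hiB
    simp only [List.get_eq_getElem] at hcl
    have := varsOf_map_subst_mono θ hcl
    simp only [Atom.subst]
    refine this.trans ?_
    rw [List.map_append, varsOf_append, hHground]
    simp
  · -- atom from the original query tail
    push_neg at hiB
    obtain ⟨k, rfl⟩ := Nat.exists_eq_add_of_le hiB
    have hk : k < Abar.length := by omega
    rw [List.getElem_append_right hiB, List.take_length_add_append]
    have hq := hquery (k + 1) (by simpa using Nat.succ_lt_succ hk)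
    simp only [List.get_eq_getElem, List.getElem_cons_succ, List.take_succ_cons,
      List.map_cons, List.flatten_cons] at hq
    have him := varsOf_map_subst_mono θ hq
    have hcl2 := varsOf_map_subst_mono θ hclause.2
    simp only [Atom.subst, Nat.add_sub_cancel_left]
    refine him.trans ?_
    rw [List.map_append, varsOf_append, List.map_append, List.flatten_append, List.map_append, varsOf_append]
    rw [List.map_append, varsOf_append, hHground] at hcl2
    simp only [Set.empty_union] at hcl2
    rw [← hout] at hcl2
    intro v hv
    rcases hv with hv | hv
    · exact Or.inl (hcl2 hv)
    · exact Or.inr hv
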